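/- arXiv:2512.04991 — 2 statements merged into one kernel-verified Lean document; each statement's English description precedes it below -/
import Mathlib

section
/- L/U constraints are monotone in parameter valuations: consider an atomic constraint c ⋈ Σᵢ αᵢ·pᵢ + d on a clock value c ∈ ℝ≥0, where the parameter index set is partitioned into lower-bound indices L and upper-bound indices U, ⋈ ∈ {≤, <} and αᵢ ≤ 0 for i ∈ L and αᵢ ≥ 0 for i ∈ U (or ⋈ ∈ {≥, >} with the inequalities on the αᵢ reversed). If the constraint holds under a parameter valuation v, then it also holds under every valuation v' with v'(pᵢ) ≤ v(pᵢ) for i ∈ L and v'(pᵢ) ≥ v(pᵢ) for i ∈ U. -/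
/-- Comparison operators `⋈ ∈ {<, ≤, ≥, >}` of an L/U atomic constraint. -/
inductive Cmp | lt | le | ge | gt

/-- Interpretation of a comparison operator over the reals. -/
def Cmp.eval : Cmp → ℝ → ℝ → Prop
  | .lt, a, b => a < b
  | .le, a, b => a ≤ b
  | .ge, a, b => a ≥ b
  | .gt, a, b => a > b

/-- L/U atomic constraints are monotone in parameter valuations: decreasing
lower-bound parameters (those not in `U`) and increasing upper-bound parameters
(those in `U`) preserves satisfaction. -/
theorem LU_atomic_mono {P : Type*} [Fintype P] (U : Set P) (c : NNReal)
    (α : P → ℤ) (d : ℤ) (cmp : Cmp)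
    (hLU : ((cmp = .le ∨ cmp = .lt) ∧ (∀ i ∉ U, α i ≤ 0) ∧ (∀ i ∈ U, 0 ≤ α i)) ∨
           ((cmp = .ge ∨ cmp = .gt) ∧ (∀ i ∉ U, 0 ≤ α i) ∧ (∀ i ∈ U, α i ≤ 0)))
    (v v' : P → ℕ)
    (hL : ∀ i ∉ U, v' i ≤ v i) (hU : ∀ i ∈ U, v i ≤ v' i)
    (h : cmp.eval (c : ℝ) (∑ i, (α i : ℝ) * (v i : ℝ) + (d : ℝ))) :
    cmp.eval (c : ℝ) (∑ i, (α i : ℝ) * (v' i : ℝ) + (d : ℝ)) := by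
  have key : ∀ (β : P → ℤ) (w w' : P → ℕ),
      (∀ i ∉ U, β i ≤ 0) → (∀ i ∈ U, 0 ≤ β i) →
      (∀ i ∉ U, w' i ≤ w i) → (∀ i ∈ U, w i ≤ w' i) →
      ∑ i, (β i : ℝ) * (w i : ℝ) ≤ ∑ i, (β i : ℝ) * (w' i : ℝ) := by
    intro β w w' h1 h2 h3 h4
    apply Finset.sum_le_sum
    intro i _
    by_cases hi : i ∈ U
    · exact mul_le_mul_of_nonneg_left (by exact_mod_cast h4 i hi)
        (by exact_mod_cast h2 i hi)
    · exact mul_le_mul_of_nonpos_left (by exact_mod_cast h3 i hi)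
        (by exact_mod_cast h1 i hi)
  rcases hLU with ⟨hc, hneg, hpos⟩ | ⟨hc, hpos, hneg⟩
  · have := key α v v' hneg hpos hL hU
    rcases hc with rfl | rfl <;> simp only [Cmp.eval] at h ⊢ <;> linarith
  · have := key (fun i => -α i) v v' (fun i hi => neg_nonpos.mpr (hpos i hi))
      (fun i hi => neg_nonneg.mpr (hneg i hi)) hL hU
    simp only [Int.cast_neg, neg_mul] at this
    rw [Finset.sum_neg_distrib, Finset.sum_neg_distrib, neg_le_neg_iff] at this
    rcases hc with rfl | rfl <;> simp only [Cmp.eval] at h ⊢ <;> linarith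
end

section
/- Copycat property of disjunctive timed networks: let A be a guarded timed automaton and suppose a configuration c = ((ℓ₁, μ₁), …, (ℓₙ, μₙ)) is reachable in the network A^n. Then for every index i ∈ {1, …, n}, the configuration ((ℓ₁, μ₁), …, (ℓₙ, μₙ), (ℓᵢ, μᵢ)) is reachable in the network A^{n+1}; that is, process n+1 can exactly duplicate the behaviour of process i. -/
open Classical in
/-- Reset of a clock valuation. -/
noncomputable def reset {X : Type*} (μ : X → NNReal) (R : Set X) : X → NNReal :=
  fun x => if x ∈ R then 0 else μ x

/-- A guarded timed automaton with locations `L`, clocks `X` and actions `Act`: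
an initial location, an invariant per location, and edges carrying a clock guard,
a location guard (`none` means `⊤`), an action and a reset set. -/
structure GTA (L X Act : Type*) where
  init : L
  inv : L → (X → NNReal) → Prop
  edges : Set (L × ((X → NNReal) → Prop) × Option L × Act × Set X × L)

namespace GTA

variable {L X Act : Type*}

/-- A configuration of the network `A^n`. -/
abbrev Config (L X : Type*) (n : ℕ) := Fin n → L × (X → NNReal)

/-- Delay transition of the network: all clocks advance by `d`, and all
invariants hold throughout the delay. -/
def DelayStep (A : GTA L X Act) {n : ℕ} (c : Config L X n) (d : NNReal)
    (c' : Config L X n) : Prop :=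
  (∀ i, (c' i).1 = (c i).1 ∧ (c' i).2 = fun x => (c i).2 x + d) ∧
  (∀ i, ∀ d' : NNReal, d' ≤ d → A.inv (c i).1 (fun x => (c i).2 x + d'))

/-- Discrete transition of the network: one process takes an edge whose clock
guard holds and whose location guard is `⊤` or occupied by another process;
the other processes are unchanged. -/
def DiscStep (A : GTA L X Act) {n : ℕ} (c c' : Config L X n) : Prop :=
  ∃ i : Fin n, ∃ g γ a R ℓ',
    ((c i).1, g, γ, a, R, ℓ') ∈ A.edges ∧
    g ((c i).2) ∧
    A.inv (c i).1 ((c i).2) ∧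
    (γ = none ∨ ∃ j, j ≠ i ∧ γ = some ((c j).1)) ∧
    (c' i).1 = ℓ' ∧ (c' i).2 = reset ((c i).2) R ∧
    A.inv ℓ' ((c' i).2) ∧
    ∀ j, j ≠ i → c' j = c j

/-- Reachability of a configuration in the network `A^n`. -/
inductive Reach (A : GTA L X Act) {n : ℕ} : Config L X n → Prop
  | init : Reach A (fun _ => (A.init, fun _ => 0))
  | delay {c d c'} : Reach A c → A.DelayStep c d c' → Reach A c'
  | disc {c c'} : Reach A c → A.DiscStep c c' → Reach A c'

end GTA

/-- Copycat property of disjunctive timed networks: if `c` is reachable in `A^n`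
then, for any process `i`, the configuration obtained by appending a fresh process
in the exact state of process `i` is reachable in `A^{n+1}`. -/
theorem copycat {L X Act : Type*} (A : GTA L X Act) {n : ℕ}
    (c : GTA.Config L X n) (h : A.Reach c) (i : Fin n) :
    A.Reach (Fin.snoc c (c i)) := by
  induction h with
  | init =>
      have he : (Fin.snoc (fun _ => (A.init, fun _ => 0)) ((fun (_ : Fin n) => (A.init, fun _ => 0)) i)
          : GTA.Config L X (n+1)) = fun _ => (A.init, fun _ => 0) := by
        funext j
        refine Fin.lastCases ?_ ?_ j
        · simp
        · intro k; simp
      rw [he]; exact GTA.Reach.init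
  | @delay c d c' _ hd ih =>
      refine GTA.Reach.delay (d := d) ih ?_
      obtain ⟨h1, h2⟩ := hd
      constructor
      · intro j
        refine Fin.lastCases ?_ ?_ j
        · simpa using h1 i
        · intro k; simpa using h1 k
      · intro j d' hd'
        refine Fin.lastCases ?_ ?_ j
        · simpa using h2 i d' hd'
        · intro k; simpa using h2 k d' hd'
  | @disc c c' _ hs ih =>
      obtain ⟨j, g, γ, a, R, ℓ', hedge, hg, hinv, hwit, h1, h2, h3, hrest⟩ := hs
      by_cases hji : j = i
      · subst hji
        -- two steps: first process j moves, then the last process copies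
        have step1 : A.DiscStep (Fin.snoc c (c j)) (Fin.snoc c' (c j)) := by
          refine ⟨Fin.castSucc j, g, γ, a, R, ℓ', ?_, ?_, ?_, ?_, ?_, ?_, ?_, ?_⟩
          · simpa using hedge
          · simpa using hg
          · simpa using hinv
          · rcases hwit with h | ⟨k, hk, hγ⟩
            · exact Or.inl h
            · exact Or.inr ⟨Fin.castSucc k, by
                simpa [Fin.castSucc_inj] using hk, by simpa using hγ⟩
          · simpa using h1
          · simpa using h2
          · simpa using h3
          · intro m
            refine Fin.lastCases ?_ ?_ m
            · intro _; simp
            · intro k hk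
              have hkj : k ≠ j := by
                intro h; exact hk (by rw [h])
              simp [hrest k hkj]
        have step2 : A.DiscStep (Fin.snoc c' (c j)) (Fin.snoc c' (c' j)) := by
          refine ⟨Fin.last n, g, γ, a, R, ℓ', ?_, ?_, ?_, ?_, ?_, ?_, ?_, ?_⟩
          · simpa using hedge
          · simpa using hg
          · simpa using hinv
          · rcases hwit with h | ⟨k, hk, hγ⟩
            · exact Or.inl h
            · refine Or.inr ⟨Fin.castSucc k, ?_, ?_⟩
              · exact (Fin.castSucc_lt_last k).ne
              · simpa [hrest k hk] using hγ
          · simpa using h1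
          · simpa using h2
          · simpa using h3
          · intro m
            refine Fin.lastCases ?_ ?_ m
            · intro h; exact absurd rfl h
            · intro k _; simp
        exact GTA.Reach.disc (GTA.Reach.disc ih step1) step2
      · -- process j ≠ i moves; the last copy (of i) is unchanged
        have hci : c' i = c i := hrest i (fun h => hji h.symm)
        have step : A.DiscStep (Fin.snoc c (c i)) (Fin.snoc c' (c' i)) := by
          refine ⟨Fin.castSucc j, g, γ, a, R, ℓ', ?_, ?_, ?_, ?_, ?_, ?_, ?_, ?_⟩
          · simpa using hedge
          · simpa using hg
          · simpa using hinv
          · rcases hwit with h | ⟨k, hk, hγ⟩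
            · exact Or.inl h
            · exact Or.inr ⟨Fin.castSucc k, by
                simpa [Fin.castSucc_inj] using hk, by simpa using hγ⟩
          · simpa using h1
          · simpa using h2
          · simpa using h3
          · intro m
            refine Fin.lastCases ?_ ?_ m
            · intro _; simp [hci]
            · intro k hk
              have hkj : k ≠ j := by
                intro h; exact hk (by rw [h])
              simp [hrest k hkj]
        exact GTA.Reach.disc ih step
end
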